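/- Let p > 3 and q be distinct primes, let a be a positive integer with gcd(a, p) = 1, let m₂ ≥ 1 and s ≥ 0 be integers, let t ≥ 1 be an integer, and let ε ∈ {1, −1}. If 2^((p−1)/2) · p^s · q^t = ε · Σ_{j=0}^{(p−1)/2} C(p, 2j+1) · a^(p−1−2j) · p^(2·j·m₂) · (−1)^j, then s = 1 and q^t ≡ 1 (mod p) or q^t ≡ −1 (mod p). -/

import Mathlib

theorem descent_d_eq_one
    (p q : ℕ) (hp : p.Prime) (hq : q.Prime) (hp3 : 3 < p) (hpq : p ≠ q)
    (a : ℕ) (ha : 0 < a) (hap : Nat.gcd a p = 1)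
    (m₂ s t : ℕ) (hm₂ : 1 ≤ m₂) (ht : 1 ≤ t)
    (ε : ℤ) (hε : ε = 1 ∨ ε = -1)
    (heq : (2 : ℤ) ^ ((p - 1) / 2) * (p : ℤ) ^ s * (q : ℤ) ^ t =
      ε * ∑ j ∈ Finset.range ((p - 1) / 2 + 1),
        (p.choose (2 * j + 1) : ℤ) * (a : ℤ) ^ (p - 1 - 2 * j) *
          (p : ℤ) ^ (2 * j * m₂) * (-1) ^ j) :
    s = 1 ∧ ((q : ℤ) ^ t ≡ 1 [ZMOD p] ∨ (q : ℤ) ^ t ≡ -1 [ZMOD p]) := by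
  haveI : Fact p.Prime := ⟨hp⟩
  set N := (p - 1) / 2 with hN
  set S : ℤ := ∑ j ∈ Finset.range (N + 1),
      (p.choose (2 * j + 1) : ℤ) * (a : ℤ) ^ (p - 1 - 2 * j) *
        (p : ℤ) ^ (2 * j * m₂) * (-1) ^ j with hSdef
  set K : ℤ := ∑ j ∈ Finset.range N,
      (p.choose (2 * (j + 1) + 1) : ℤ) * (a : ℤ) ^ (p - 1 - 2 * (j + 1)) *
        (p : ℤ) ^ (2 * (j + 1) * m₂ - 2) * (-1) ^ (j + 1) with hKdef
  have hε2 : ε * ε = 1 := by rcases hε with h | h <;> simp [h]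
  -- split the sum
  have hS : S = (p : ℤ) * (a : ℤ) ^ (p - 1) + (p : ℤ) ^ 2 * K := by
    rw [hSdef, Finset.sum_range_succ']
    have h0 : (p.choose (2 * 0 + 1) : ℤ) * (a : ℤ) ^ (p - 1 - 2 * 0) *
        (p : ℤ) ^ (2 * 0 * m₂) * (-1 : ℤ) ^ 0 = (p : ℤ) * (a : ℤ) ^ (p - 1) := by
      simp [Nat.choose_one_right]
    rw [h0, hKdef, Finset.mul_sum]
    rw [add_comm]
    congr 1
    apply Finset.sum_congr rfl
    intro j _
    have h2 : 2 ≤ 2 * (j + 1) * m₂ := by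
      calc 2 = 2 * 1 * 1 := by ring
      _ ≤ 2 * (j + 1) * m₂ := by
        apply Nat.mul_le_mul
        · exact Nat.mul_le_mul_left 2 (Nat.succ_le_succ (Nat.zero_le j))
        · exact hm₂
    have hpow : (p : ℤ) ^ (2 * (j + 1) * m₂) =
        (p : ℤ) ^ 2 * (p : ℤ) ^ (2 * (j + 1) * m₂ - 2) := by
      rw [← pow_add]
      congr 1
      omega
    rw [hpow]; ring
  have heq2 : ε * ((2 : ℤ) ^ N * (p : ℤ) ^ s * (q : ℤ) ^ t) =
      (p : ℤ) * (a : ℤ) ^ (p - 1) + (p : ℤ) ^ 2 * K := by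
    linear_combination ε * heq + hS + S * hε2
  have hpi : Prime (p : ℤ) := Nat.prime_iff_prime_int.mp hp
  have hp0 : (p : ℤ) ≠ 0 := by exact_mod_cast hp.ne_zero
  have hpa : ¬ (p : ℤ) ∣ (a : ℤ) := by
    intro h
    have h' : p ∣ a := Int.ofNat_dvd.mp h
    have h1 : p ∣ 1 := hap ▸ Nat.dvd_gcd h' dvd_rfl
    have := Nat.le_of_dvd one_pos h1
    omega
  -- s = 1
  have hs1 : s = 1 := by
    rcases Nat.lt_or_ge s 1 with h | h
    · -- s = 0 : contradiction
      exfalso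
      interval_cases s
      have hdvd : (p : ℤ) ∣ ε * ((2 : ℤ) ^ N * (q : ℤ) ^ t) := by
        refine ⟨(a : ℤ) ^ (p - 1) + (p : ℤ) * K, ?_⟩
        linear_combination heq2
      have hdvd2 : (p : ℤ) ∣ (2 : ℤ) ^ N * (q : ℤ) ^ t := by
        rcases hε with h | h <;> simpa [h] using hdvd
      rcases (hpi.dvd_mul.mp hdvd2) with h2 | hq'
      · have := hpi.dvd_of_dvd_pow h2
        have : (p : ℤ) ∣ 2 := this
        have hple : p ≤ 2 := by
          have := Int.le_of_dvd (by norm_num) this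
          exact_mod_cast this
        omega
      · have := hpi.dvd_of_dvd_pow hq'
        have h' : p ∣ q := Int.ofNat_dvd.mp this
        exact hpq ((Nat.prime_dvd_prime_iff_eq hp hq).mp h')
    rcases Nat.lt_or_ge s 2 with h' | h'
    · omega
    · -- s ≥ 2 : contradiction
      exfalso
      have hd1 : (p : ℤ) ^ 2 ∣ ε * ((2 : ℤ) ^ N * (p : ℤ) ^ s * (q : ℤ) ^ t) :=
        Dvd.dvd.mul_left (Dvd.dvd.mul_right (Dvd.dvd.mul_left
          (pow_dvd_pow (p : ℤ) h') _) _) _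
      rw [heq2] at hd1
      have hd2 : (p : ℤ) ^ 2 ∣ (p : ℤ) * (a : ℤ) ^ (p - 1) := by
        have := dvd_sub hd1 (Dvd.intro K rfl)
        simpa using this
      have hd3 : (p : ℤ) ∣ (a : ℤ) ^ (p - 1) := by
        rcases hd2 with ⟨c, hc⟩
        refine ⟨c, ?_⟩
        have : (p : ℤ) * (a : ℤ) ^ (p - 1) = (p : ℤ) * ((p : ℤ) * c) := by
          rw [hc]; ring
        exact mul_left_cancel₀ hp0 this
      exact hpa (hpi.dvd_of_dvd_pow hd3)
  subst hs1
  refine ⟨rfl, ?_⟩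
  -- cancel p
  have hcancel : ε * ((2 : ℤ) ^ N * (q : ℤ) ^ t) = (a : ℤ) ^ (p - 1) + (p : ℤ) * K := by
    have h : (p : ℤ) * (ε * ((2 : ℤ) ^ N * (q : ℤ) ^ t)) =
        (p : ℤ) * ((a : ℤ) ^ (p - 1) + (p : ℤ) * K) := by
      linear_combination heq2
    exact mul_left_cancel₀ hp0 h
  -- pass to ZMod p
  have ha0 : (a : ZMod p) ≠ 0 := by
    rw [Ne, ZMod.natCast_eq_zero_iff]
    intro h
    exact hpa (Int.ofNat_dvd.mpr h)
  have h20 : (2 : ZMod p) ≠ 0 := by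
    have : ¬ p ∣ 2 := fun h => by have := Nat.le_of_dvd (by norm_num) h; omega
    simpa [ZMod.natCast_eq_zero_iff] using
      (show ((2 : ℕ) : ZMod p) ≠ 0 by
        rw [Ne, ZMod.natCast_eq_zero_iff]; exact this)
  have hzm : (ε : ZMod p) * (2 : ZMod p) ^ N * ((q : ZMod p)) ^ t = 1 := by
    have := congrArg (fun x : ℤ => (x : ZMod p)) hcancel
    push_cast at this
    rw [ZMod.natCast_self] at this
    rw [ZMod.pow_card_sub_one_eq_one ha0] at this
    simpa [mul_assoc] using this
  have hodd : p % 2 = 1 := Nat.odd_iff.mp (hp.odd_of_ne_two (by omega))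
  have h2N : 2 * N = p - 1 := by
    rw [hN]
    omega
  have hu2 : ((2 : ZMod p) ^ N) * ((2 : ZMod p) ^ N) = 1 := by
    rw [← pow_add]
    have : N + N = p - 1 := by omega
    rw [this]
    exact ZMod.pow_card_sub_one_eq_one h20
  have hu : (2 : ZMod p) ^ N = 1 ∨ (2 : ZMod p) ^ N = -1 := mul_self_eq_one_iff.mp hu2
  have key : (q : ZMod p) ^ t = 1 ∨ (q : ZMod p) ^ t = -1 := by
    rcases hε with he | he <;> rcases hu with h | h
    · left; rw [he, h] at hzm; simpa using hzm
    · right; rw [he, h] at hzm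
      have : -((q : ZMod p) ^ t) = 1 := by linear_combination hzm
      linear_combination -this
    · right; rw [he, h] at hzm
      have : -((q : ZMod p) ^ t) = 1 := by linear_combination hzm
      linear_combination -this
    · left; rw [he, h] at hzm; simpa using hzm
  rcases key with h | h
  · left
    rw [← ZMod.intCast_eq_intCast_iff]
    push_cast
    exact h
  · right
    rw [← ZMod.intCast_eq_intCast_iff]
    push_cast
    exact h
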